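/- Local Harnack inequality: Let P = Δ_{1,a} + W be a Schrödinger operator on a locally finite graph G, and K a finite subgraph whose interior K° = {x ∈ K : (y ∼ x ⟹ y ∈ K)} is connected. Then there exists a constant k > 0, depending only on K, a, W (not on φ), such that every φ : V → ℝ strictly positive on K with Pφ ≡ 0 on K° satisfies 1/k ≤ φ(x)/φ(y) ≤ k for all x, y ∈ K°. -/

import Mathlib

open Finset

variable {V : Type*}

/-- Weighted Laplacian: `(Δ_{ω,c} f)(x) = (1/ω_x²) Σ_{y∼x} c_{xy}(f(x) − f(y))`. -/
noncomputable def lapW (G : SimpleGraph V) [∀ x : V, Fintype (G.neighborSet x)]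
    (ω : V → ℝ) (c : V → V → ℝ) (f : V → ℝ) (x : V) : ℝ :=
  (1 / (ω x) ^ 2) * ∑ y ∈ G.neighborFinset x, c x y * (f x - f y)

/-- Schrödinger operator: `(Δ_{1,a} + W) f (x) = Σ_{y∼x} a_{xy}(f(x) − f(y)) + W(x) f(x)`. -/
noncomputable def schrod (G : SimpleGraph V) [∀ x : V, Fintype (G.neighborSet x)]
    (a : V → V → ℝ) (W : V → ℝ) (f : V → ℝ) (x : V) : ℝ :=
  (∑ y ∈ G.neighborFinset x, a x y * (f x - f y)) + W x * f x

/-- The interior of a set of vertices `K`: vertices of `K` all of whose neighbors lie in `K`. -/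
def intr (G : SimpleGraph V) (K : Set V) : Set V :=
  {x | x ∈ K ∧ ∀ y, G.Adj x y → y ∈ K}

/-- One-step bound: at an interior vertex `u` where `Pφ = 0`, the value of `φ` at any
neighbor `v` is controlled by `φ u` times a constant not depending on `φ`. -/
lemma harnack_key (G : SimpleGraph V) [∀ x : V, Fintype (G.neighborSet x)]
    (a : V → V → ℝ) (ha : ∀ x y, G.Adj x y → 0 < a x y) (W : V → ℝ)
    (K : Set V) (φ : V → ℝ) (hφ : ∀ x ∈ K, 0 < φ x)
    (u : V) (hu : u ∈ intr G K) (h0 : schrod G a W φ u = 0)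
    (v : V) (hv : v ∈ G.neighborFinset u) :
    φ v ≤ (max ((∑ z ∈ G.neighborFinset u, a u z + W u) / a u v) 1) * φ u := by
  have hav : 0 < a u v := ha u v ((G.mem_neighborFinset _ _).1 hv)
  have hφu : 0 < φ u := hφ u hu.1
  have hsum : ∑ z ∈ G.neighborFinset u, a u z * φ z
      = (∑ z ∈ G.neighborFinset u, a u z + W u) * φ u := by
    have h : (∑ z ∈ G.neighborFinset u, a u z * (φ u - φ z)) + W u * φ u = 0 := h0
    have h2 : ∑ z ∈ G.neighborFinset u, a u z * (φ u - φ z)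
        = (∑ z ∈ G.neighborFinset u, a u z) * φ u
          - ∑ z ∈ G.neighborFinset u, a u z * φ z := by
      rw [Finset.sum_mul, ← Finset.sum_sub_distrib]
      exact Finset.sum_congr rfl (fun z _ => by ring)
    rw [h2] at h
    linarith
  have hsingle : a u v * φ v ≤ ∑ z ∈ G.neighborFinset u, a u z * φ z := by
    apply Finset.single_le_sum (f := fun z => a u z * φ z) _ hv
    intro z hz
    have hadj := (G.mem_neighborFinset _ _).1 hz
    exact le_of_lt (mul_pos (ha u z hadj) (hφ z (hu.2 z hadj)))
  have hmx : (∑ z ∈ G.neighborFinset u, a u z + W u)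
      ≤ (max ((∑ z ∈ G.neighborFinset u, a u z + W u) / a u v) 1) * a u v :=
    (div_le_iff₀ hav).1 (le_max_left _ _)
  have hfin : a u v * φ v
      ≤ (max ((∑ z ∈ G.neighborFinset u, a u z + W u) / a u v) 1) * a u v * φ u := by
    calc a u v * φ v ≤ (∑ z ∈ G.neighborFinset u, a u z + W u) * φ u := by
          rw [← hsum]; exact hsingle
    _ ≤ _ := mul_le_mul_of_nonneg_right hmx hφu.le
  nlinarith

/-- Iterating a one-step multiplicative bound along a walk. -/
lemma harnack_walk {α : Type*} (H : SimpleGraph α) (f : α → ℝ) (M : ℝ) (hM : 0 ≤ M)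
    (hstep : ∀ u v, H.Adj u v → f u ≤ M * f v) :
    ∀ {u v : α} (w : H.Walk u v), f u ≤ M ^ w.length * f v := by
  intro u v w
  induction w with
  | nil => simp
  | @cons u u' v h p ih =>
    simp only [SimpleGraph.Walk.length_cons]
    calc f u ≤ M * f u' := hstep _ _ h
    _ ≤ M * (M ^ p.length * f v) := mul_le_mul_of_nonneg_left ih hM
    _ = M ^ (p.length + 1) * f v := by ring

/-- local Harnack inequality. -/
theorem stmt4 (G : SimpleGraph V) [∀ x : V, Fintype (G.neighborSet x)]
    (a : V → V → ℝ) (ha : ∀ x y, G.Adj x y → 0 < a x y)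
    (has : ∀ x y, a x y = a y x) (W : V → ℝ)
    (K : Set V) (hK : K.Finite)
    (hconn : (G.induce (intr G K)).Preconnected) :
    ∃ k > (0 : ℝ), ∀ φ : V → ℝ, (∀ x ∈ K, 0 < φ x) →
      (∀ x ∈ intr G K, schrod G a W φ x = 0) →
      ∀ x ∈ intr G K, ∀ y ∈ intr G K,
        1 / k ≤ φ x / φ y ∧ φ x / φ y ≤ k := by
  classical
  set S : Set V := intr G K with hSdef
  have hS : S.Finite := hK.subset (fun x hx => hx.1)
  haveI : Fintype ↥S := hS.fintype
  -- the per-edge constant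
  set c : V → V → ℝ := fun u v =>
    max ((∑ z ∈ G.neighborFinset u, a u z + W u) / a u v) 1 with hc
  have hc1 : ∀ u v, (1 : ℝ) ≤ c u v := fun u v => le_max_right _ _
  -- a global bound
  set M : ℝ := 1 + ∑ u ∈ hS.toFinset, ∑ v ∈ G.neighborFinset u, c u v with hMdef
  have hsums_nonneg : (0:ℝ) ≤ ∑ u ∈ hS.toFinset, ∑ v ∈ G.neighborFinset u, c u v := by
    apply Finset.sum_nonneg; intro u _
    apply Finset.sum_nonneg; intro v _
    linarith [hc1 u v]
  have hM1 : (1:ℝ) ≤ M := by simp only [hMdef]; linarith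
  have hcM : ∀ u ∈ hS.toFinset, ∀ v ∈ G.neighborFinset u, c u v ≤ M := by
    intro u hu v hv
    have h1 : c u v ≤ ∑ w ∈ G.neighborFinset u, c u w :=
      Finset.single_le_sum (fun w _ => by linarith [hc1 u w]) hv
    have h2 : ∑ w ∈ G.neighborFinset u, c u w
        ≤ ∑ u' ∈ hS.toFinset, ∑ w ∈ G.neighborFinset u', c u' w :=
      Finset.single_le_sum (f := fun u' => ∑ w ∈ G.neighborFinset u', c u' w)
        (fun u' _ => Finset.sum_nonneg (fun w _ => by linarith [hc1 u' w])) hu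
    simp only [hMdef]; linarith
  refine ⟨M ^ Fintype.card ↥S, pow_pos (by linarith : (0:ℝ) < M) _, ?_⟩
  intro φ hφ h0 x hx y hy
  have hφS : ∀ z ∈ S, 0 < φ z := fun z hz => hφ z hz.1
  -- main bound: φ x ≤ k * φ y for all x, y ∈ S
  have main : ∀ x ∈ S, ∀ y ∈ S, φ x ≤ M ^ Fintype.card ↥S * φ y := by
    intro x hx y hy
    obtain ⟨w⟩ := hconn ⟨x, hx⟩ ⟨y, hy⟩
    -- walk bound on the induced graph applied to φ ∘ (↑)
    have hb : ∀ (p : (G.induce S).Walk ⟨x, hx⟩ ⟨y, hy⟩),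
        φ x ≤ M ^ p.length * φ y := by
      intro p
      have := harnack_walk (G.induce S) (fun z : ↥S => φ z) M (by linarith)
        (fun u v huv => by
          have hadj : G.Adj ↑u ↑v := huv
          have hvin : (↑u : V) ∈ G.neighborFinset ↑v :=
            (G.mem_neighborFinset _ _).2 hadj.symm
          have hkey := harnack_key G a ha W K φ hφ ↑v v.2 (h0 ↑v v.2) ↑u hvin
          have hcle : c ↑v ↑u ≤ M := hcM ↑v (hS.mem_toFinset.2 v.2) ↑u hvin
          calc φ ↑u ≤ c ↑v ↑u * φ ↑v := hkey
          _ ≤ M * φ ↑v := mul_le_mul_of_nonneg_right hcle (hφS ↑v v.2).le) p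
      exact this
    set p := w.toPath with hp
    have hlen : (p : (G.induce S).Walk ⟨x, hx⟩ ⟨y, hy⟩).length < Fintype.card ↥S :=
      p.2.length_lt
    calc φ x ≤ M ^ (p : (G.induce S).Walk _ _).length * φ y := hb _
    _ ≤ M ^ Fintype.card ↥S * φ y := by
        apply mul_le_mul_of_nonneg_right _ (hφS y hy).le
        exact pow_le_pow_right₀ (by linarith) hlen.le
  have hφx := hφS x hx
  have hφy := hφS y hy
  have hk : (0:ℝ) < M ^ Fintype.card ↥S := pow_pos (by linarith : (0:ℝ) < M) _
  constructor
  · rw [div_le_div_iff₀ hk hφy]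
    have := main y hy x hx
    linarith
  · rw [div_le_iff₀ hφy]
    exact main x hx y hy
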